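/- Let a ∈ ℂ^N and b ∈ ℂ^N be such that whenever a_i = a_j one has b_i = b_j, and set γ = max over pairs with a_i ≠ a_j of |(b_i - a_i) - (b_j - a_j)|/|a_i - a_j|. Given a family f_1,...,f_N : ℂ^N → ℂ satisfying the Whitney interpolation axioms (1)-(5) with constant C, define the interpolation map ψ(z) = z + (Σ_i μ_i(z) D_i)/μ(z) for z ∉ {a_1,...,a_N} and ψ(a_i) = b_i, where μ_i(z) = f_i((z-a_1)^{-1},...,(z-a_N)^{-1}), μ = Σ μ_i, D_i = b_i - a_i. Then ψ : ℂ → ℂ is Lipschitz with constant 4N^3 C^4 γ + 1, and if γ < (4N^3 C^4)^{-1} then ψ is a bi-Lipschitz homeomorphism whose inverse has Lipschitz constant (1 - 4N^3 C^4 γ)^{-1}. -/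

import Mathlib

open Complex in
lemma aux_avoid13 {N : ℕ} (a : Fin N → ℂ) (p q : ℂ) (hpq : q - p ≠ 0)
    (hp : ∀ i, a i - p ≠ 0) {δ : ℝ} (hδ : 0 < δ) :
    ∃ q' : ℂ, ‖q' - q‖ < δ ∧ ∀ t : ℝ, t ∈ Set.Icc (0:ℝ) 1 → ∀ i, p + t • (q' - p) ≠ a i := by
  classical
  set w : Fin N → ℂ := fun i => (a i - p) / (q - p) with hw
  have hw0 : ∀ i, w i ≠ 0 := fun i => div_ne_zero (hp i) hpq
  set Bad : Fin N → Set ℝ := fun i =>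
    {θ | θ ∈ Set.Ioo (0:ℝ) 1 ∧ Complex.exp (θ * Complex.I) = w i / (‖w i‖ : ℂ)}
    with hBad
  have hsub : ∀ i, (Bad i).Subsingleton := by
    intro i θ₁ h₁ θ₂ h₂
    have h := h₁.2.trans h₂.2.symm
    rw [Complex.exp_eq_exp_iff_exists_int] at h
    obtain ⟨n, hn⟩ := h
    have hc : (θ₁ : ℂ) = (θ₂ : ℂ) + (n : ℂ) * (2 * Real.pi) := by
      apply mul_right_cancel₀ Complex.I_ne_zero
      rw [hn]; push_cast; ring
    have hr : θ₁ = θ₂ + (n : ℝ) * (2 * Real.pi) := by exact_mod_cast hc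
    have hπ := Real.pi_gt_three
    obtain ⟨⟨h10, h11⟩, -⟩ := h₁
    obtain ⟨⟨h20, h21⟩, -⟩ := h₂
    have hn0 : n = 0 := by
      rcases lt_trichotomy n 0 with h | h | h
      · exfalso
        have hle : (n : ℝ) ≤ -1 := by exact_mod_cast Int.le_sub_one_of_lt h
        nlinarith
      · exact h
      · exfalso
        have hle : (1:ℝ) ≤ (n : ℝ) := by exact_mod_cast h
        nlinarith
    rw [hn0] at hr; simpa using hr
  have hfin : (⋃ i, Bad i).Finite := Set.finite_iUnion fun i => (hsub i).finite
  set δ' : ℝ := min 1 (δ / (2 * ‖q - p‖ + 1)) with hδ'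
  have hδ'pos : 0 < δ' := lt_min one_pos (by positivity)
  have hinf : (Set.Ioo (0:ℝ) δ').Infinite := Set.Ioo_infinite hδ'pos
  obtain ⟨θ, hθI, hθB⟩ := (hinf.diff hfin).nonempty
  have hθ0 : 0 < θ := hθI.1
  have hθδ' : θ < δ' := hθI.2
  have hθ1 : θ < 1 := lt_of_lt_of_le hθδ' (min_le_left _ _)
  refine ⟨p + Complex.exp (θ * Complex.I) * (q - p), ?_, ?_⟩
  · have h1 : p + Complex.exp (θ*Complex.I) * (q - p) - q
        = (Complex.exp (θ*Complex.I) - 1) * (q - p) := by ring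
    rw [h1, norm_mul]
    have habs : ‖Complex.exp ((θ:ℂ)*Complex.I) - 1‖ ≤ 2 * θ := by
      have h2 : ‖(θ:ℂ)*Complex.I‖ = θ := by
        simp [abs_of_pos hθ0]
      have := Complex.norm_exp_sub_one_le (x := (θ:ℂ)*Complex.I) (by rw [h2]; linarith)
      rw [h2] at this
      simpa using this
    have hδ2 : θ < δ / (2 * ‖q - p‖ + 1) := lt_of_lt_of_le hθδ' (min_le_right _ _)
    have hqp0 : (0:ℝ) ≤ ‖q - p‖ := norm_nonneg _
    calc ‖Complex.exp ((θ:ℂ)*Complex.I) - 1‖ * ‖q - p‖ ≤ (2*θ) * ‖q - p‖ :=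
          mul_le_mul_of_nonneg_right habs hqp0
      _ < δ := by
          have hmul : θ * (2 * ‖q - p‖ + 1) < δ := (lt_div_iff₀ (by positivity)).mp hδ2
          nlinarith
  · rintro t ⟨ht0, ht1⟩ i heq
    have heq2 : (t : ℂ) * (Complex.exp ((θ:ℂ)*Complex.I) * (q - p)) = a i - p := by
      rw [← heq, Complex.real_smul]; ring
    have heq3 : (t:ℂ) * Complex.exp ((θ:ℂ)*Complex.I) = w i := by
      simp only [hw]
      rw [eq_div_iff hpq, ← heq2]; ring
    have habs : t = ‖w i‖ := by
      have h := congrArg (‖·‖) heq3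
      simpa [Complex.norm_exp_ofReal_mul_I,
        _root_.abs_of_nonneg ht0] using h
    have htne : (t:ℂ) ≠ 0 := by
      intro h0
      have ht00 : t = 0 := by exact_mod_cast h0
      rw [ht00] at habs
      exact hw0 i (by simpa using habs.symm)
    have hexp : Complex.exp ((θ:ℂ)*Complex.I) = w i / (‖w i‖ : ℂ) := by
      rw [← habs, eq_div_iff htne, mul_comm]
      exact heq3
    exact hθB (Set.mem_iUnion.2 ⟨i, ⟨⟨hθ0, hθ1⟩, hexp⟩⟩)

set_option maxHeartbeats 1000000 in
/-- Proposition (lipschitz): given a family `f₁,...,f_N : ℂ^N → ℂ` satisfying the Whitney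
interpolation axioms (1)-(5) with constant `C > 1` and degree `d`, and `a, b ∈ ℂ^N` with
`a_i = a_j ⟹ b_i = b_j` and `γ` bounding `|(b_i-a_i)-(b_j-a_j)|/|a_i-a_j|`, the Whitney
interpolation map `ψ(z) = z + (Σ μ_i(z)(b_i-a_i))/μ(z)`, `ψ(a_i) = b_i`, is Lipschitz with
constant `4N³C⁴γ + 1`, and if `γ < (4N³C⁴)⁻¹` it is a bi-Lipschitz homeomorphism whose
inverse has Lipschitz constant `(1 - 4N³C⁴γ)⁻¹`. -/
theorem stmt13 {N d : ℕ} (hN : 0 < N) (hd : 0 < d) (C : ℝ) (hC : 1 < C)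
    (f : Fin N → (Fin N → ℂ) → ℂ)
    (hcont : ∀ i, Continuous (f i))
    (hdiff : ∀ i (ξ : Fin N → ℂ), (∀ l, ξ l ≠ 0) → DifferentiableAt ℝ (f i) ξ)
    (hhom : ∀ i (ξ : Fin N → ℂ) (r : ℝ), 0 < r → f i (r • ξ) = (r : ℂ) ^ d * f i ξ)
    (hsym : ∀ i (ξ : Fin N → ℂ) (σ : Equiv.Perm (Fin N)), f i (ξ ∘ σ) = f (σ i) ξ)
    (hbound : ∀ j (ξ : Fin N → ℂ), ‖f j ξ‖ ≤ C * ‖ξ j‖ * ‖ξ‖ ^ (d - 1))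
    (hderbound : ∀ j k (ξ : Fin N → ℂ), (∀ l, ξ l ≠ 0) → ∀ v : ℂ,
      ‖ξ k‖ ^ 2 * ‖fderiv ℝ (f j) ξ (Pi.single k v)‖ ≤ C * ‖ξ j‖ * ‖ξ‖ ^ d * ‖v‖)
    (hreal : ∀ ξ : Fin N → ℂ, (∑ i, f i ξ).im = 0 ∧
      C⁻¹ * ‖ξ‖ ^ d ≤ (∑ i, f i ξ).re ∧ (∑ i, f i ξ).re ≤ C * ‖ξ‖ ^ d)
    (a b : Fin N → ℂ) (hab : ∀ i j, a i = a j → b i = b j)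
    (γ : ℝ) (hγ0 : 0 ≤ γ)
    (hγ : ∀ i j, a i ≠ a j → ‖(b i - a i) - (b j - a j)‖ ≤ γ * ‖a i - a j‖)
    (ψ : ℂ → ℂ)
    (hψ1 : ∀ z : ℂ, (∀ i, z ≠ a i) →
      ψ z = z + (∑ i, f i (fun k => (z - a k)⁻¹) * (b i - a i)) /
        (∑ i, f i (fun k => (z - a k)⁻¹)))
    (hψ2 : ∀ i, ψ (a i) = b i) :
    LipschitzWith (Real.toNNReal (4 * (N : ℝ) ^ 3 * C ^ 4 * γ + 1)) ψ ∧
      (γ < (4 * (N : ℝ) ^ 3 * C ^ 4)⁻¹ →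
        Function.Bijective ψ ∧
        ∀ p q : ℂ, ‖p - q‖ ≤ (1 - 4 * (N : ℝ) ^ 3 * C ^ 4 * γ)⁻¹ * ‖ψ p - ψ q‖) := by
  classical
  obtain ⟨e, rfl⟩ : ∃ e, d = e + 1 := ⟨d - 1, (Nat.succ_pred_eq_of_pos hd).symm⟩
  simp only [Nat.add_sub_cancel] at hbound
  have hC0 : (0:ℝ) < C := lt_trans one_pos hC
  have hC1 : (1:ℝ) ≤ C := hC.le
  have hN1 : (1:ℝ) ≤ (N:ℝ) := by exact_mod_cast hN
  set L : ℝ := 4 * (N:ℝ)^3 * C^4 * γ with hLdef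
  have hL0 : 0 ≤ L := by positivity
  set g : ℂ → ℂ := fun z => ψ z - z with hgdef
  set D : Fin N → ℂ := fun i => b i - a i with hDdef
  have hDγ : ∀ i j, ‖D i - D j‖ ≤ γ * ‖a i - a j‖ := by
    intro i j
    by_cases h : a i = a j
    · simp [hDdef, h, hab i j h]
    · exact hγ i j h
  -- the key analytic facts at points off the set {a i}
  have key : ∀ z : ℂ, (∀ i, z ≠ a i) →
      (∀ j, ‖g z - D j‖ ≤ 2*(N:ℝ)*C^2*γ*‖z - a j‖) ∧
      DifferentiableAt ℝ g z ∧ ‖fderiv ℝ g z‖ ≤ L := by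
    intro z hz
    have hsub : ∀ k, z - a k ≠ 0 := fun k => sub_ne_zero.2 (hz k)
    set ξ : Fin N → ℂ := fun k => (z - a k)⁻¹ with hξdef
    have hξ0 : ∀ k, ξ k ≠ 0 := fun k => inv_ne_zero (hsub k)
    have hξnorm : ∀ k, ‖ξ k‖ = ‖z - a k‖⁻¹ := fun k => norm_inv _
    have hξpos : ∀ k, 0 < ‖ξ k‖ := fun k => norm_pos_iff.2 (hξ0 k)
    have hle : ∀ k, ‖ξ k‖ ≤ ‖ξ‖ := fun k => norm_le_pi_norm ξ k
    have hMpos : 0 < ‖ξ‖ := lt_of_lt_of_le (hξpos ⟨0, hN⟩) (hle _)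
    set M := ‖ξ‖ with hMdef
    set μ : ℂ := ∑ i, f i ξ with hμdef
    have hμlow : C⁻¹ * M^(e+1) ≤ ‖μ‖ := by
      refine le_trans (hreal ξ).2.1 ?_
      exact Complex.re_le_norm μ
    have hμpos : 0 < ‖μ‖ := lt_of_lt_of_le (by positivity) hμlow
    have hμne : μ ≠ 0 := by simpa using norm_pos_iff.1 hμpos
    have hone : ∀ k, ‖ξ k‖ * ‖z - a k‖ = 1 := by
      intro k
      rw [hξnorm k]
      exact inv_mul_cancel₀ (norm_ne_zero_iff.2 (hsub k))
    have hgz : g z = (∑ i, f i ξ * D i) / μ := by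
      simp only [hgdef]
      rw [hψ1 z hz]
      simp only [← hξdef, ← hμdef, ← hDdef]
      ring
    -- part 1 : pointwise estimate
    have hg6 : ∀ j, ‖g z - D j‖ ≤ 2*(N:ℝ)*C^2*γ*‖z - a j‖ := by
      intro j
      have h1 : g z - D j = (∑ i, f i ξ * (D i - D j)) / μ := by
        rw [hgz, div_sub' hμne]
        congr 1
        simp only [mul_sub]
        rw [Finset.sum_sub_distrib]
        congr 1
        rw [hμdef, Finset.sum_mul]
      rw [h1, norm_div, div_le_iff₀ hμpos]
      have hterm : ∀ i : Fin N, ‖f i ξ‖ * ‖D i - D j‖ ≤ 2*C*γ*M^(e+1)*‖z - a j‖ := by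
        intro i
        have hfb : ‖f i ξ‖ ≤ C * ‖ξ i‖ * M^e := hbound i ξ
        have hDij : ‖D i - D j‖ ≤ γ * (‖z - a i‖ + ‖z - a j‖) := by
          refine (hDγ i j).trans (mul_le_mul_of_nonneg_left ?_ hγ0)
          calc ‖a i - a j‖ ≤ ‖a i - z‖ + ‖z - a j‖ := norm_sub_le_norm_sub_add_norm_sub _ _ _
            _ = ‖z - a i‖ + ‖z - a j‖ := by rw [norm_sub_rev]
        have e2 : (1:ℝ) ≤ M * ‖z - a j‖ := by
          calc (1:ℝ) = ‖ξ j‖ * ‖z - a j‖ := (hone j).symm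
            _ ≤ M * ‖z - a j‖ := mul_le_mul_of_nonneg_right (hle j) (norm_nonneg _)
        have e3 : ‖ξ i‖ * (‖z - a i‖ + ‖z - a j‖) ≤ 2 * (M * ‖z - a j‖) := by
          rw [mul_add, hone i]
          have : ‖ξ i‖ * ‖z - a j‖ ≤ M * ‖z - a j‖ :=
            mul_le_mul_of_nonneg_right (hle i) (norm_nonneg _)
          linarith
        calc ‖f i ξ‖ * ‖D i - D j‖
            ≤ (C * ‖ξ i‖ * M^e) * (γ * (‖z - a i‖ + ‖z - a j‖)) :=
              mul_le_mul hfb hDij (norm_nonneg _) (by positivity)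
          _ = (C * γ * M^e) * (‖ξ i‖ * (‖z - a i‖ + ‖z - a j‖)) := by ring
          _ ≤ (C * γ * M^e) * (2 * (M * ‖z - a j‖)) :=
              mul_le_mul_of_nonneg_left e3 (by positivity)
          _ = 2*C*γ*M^(e+1)*‖z - a j‖ := by rw [pow_succ]; ring
      calc ‖∑ i, f i ξ * (D i - D j)‖ ≤ ∑ i, ‖f i ξ‖ * ‖D i - D j‖ := by
            refine (norm_sum_le _ _).trans (Finset.sum_le_sum fun i _ => ?_)
            rw [norm_mul]
        _ ≤ ∑ _i : Fin N, 2*C*γ*M^(e+1)*‖z - a j‖ := Finset.sum_le_sum fun i _ => hterm i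
        _ = (N:ℝ) * (2*C*γ*M^(e+1)*‖z - a j‖) := by
            rw [Finset.sum_const, Finset.card_univ, Fintype.card_fin, nsmul_eq_mul]
        _ = (2*(N:ℝ)*C^2*γ*‖z - a j‖) * (C⁻¹ * M^(e+1)) := by
            field_simp
        _ ≤ (2*(N:ℝ)*C^2*γ*‖z - a j‖) * ‖μ‖ :=
            mul_le_mul_of_nonneg_left hμlow (by positivity)
    refine ⟨hg6, ?_⟩
    -- part 2 : derivative
    set c : Fin N → ℂ := fun k => -1 / (z - a k)^2 with hcdef
    set Ξ' : ℂ →L[ℝ] (Fin N → ℂ) := ContinuousLinearMap.pi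
      (fun k => ((1 : ℂ →L[ℂ] ℂ).smulRight (c k)).restrictScalars ℝ) with hΞdef
    have hΞ : HasFDerivAt (fun w : ℂ => fun k => (w - a k)⁻¹) Ξ' z := by
      rw [hΞdef]
      refine hasFDerivAt_pi.mpr fun k => ?_
      exact (((hasDerivAt_id z).sub_const (a k)).inv (hsub k)).hasFDerivAt.restrictScalars ℝ
    have hΞv : ∀ v : ℂ, Ξ' v = fun k => v * c k := by
      intro v
      funext k
      simp [hΞdef, ContinuousLinearMap.smulRight_apply, smul_eq_mul]
    set Df : Fin N → ((Fin N → ℂ) →L[ℝ] ℂ) := fun i => fderiv ℝ (f i) ξ with hDfdef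
    have hμi : ∀ i, HasFDerivAt (fun w : ℂ => f i (fun k => (w - a k)⁻¹))
        ((Df i).comp Ξ') z := by
      intro i
      exact ((hdiff i ξ hξ0).hasFDerivAt).comp z hΞ
    -- bound on the derivative of each μ_i
    have hμib : ∀ (i : Fin N) (v : ℂ), ‖((Df i).comp Ξ') v‖ ≤ (N:ℝ) * C * ‖ξ i‖ * M^(e+1) * ‖v‖ := by
      intro i v
      have hsingle : Ξ' v = ∑ k, Pi.single k (v * c k) := by
        funext j
        rw [hΞv, Finset.sum_apply]
        exact (Fintype.sum_pi_single j (fun k => v * c k)).symm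
      rw [ContinuousLinearMap.comp_apply, hsingle, map_sum]
      have hterm : ∀ k : Fin N, ‖Df i (Pi.single k (v * c k))‖ ≤ C * ‖ξ i‖ * M^(e+1) * ‖v‖ := by
        intro k
        have hdd := hderbound i k ξ hξ0 (v * c k)
        have hck : ‖c k‖ = ‖ξ k‖^2 := by
          rw [hcdef]
          simp only [norm_div, norm_neg, norm_one, norm_pow, hξnorm k]
          rw [inv_pow, one_div]
        have h2 : ‖ξ k‖^2 * ‖Df i (Pi.single k (v * c k))‖
            ≤ (C * ‖ξ i‖ * M^(e+1) * ‖v‖) * ‖ξ k‖^2 := by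
          calc ‖ξ k‖^2 * ‖Df i (Pi.single k (v * c k))‖
              ≤ C * ‖ξ i‖ * M^(e+1) * ‖v * c k‖ := hdd
            _ = (C * ‖ξ i‖ * M^(e+1) * ‖v‖) * ‖ξ k‖^2 := by rw [norm_mul, hck]; ring
        have hp : (0:ℝ) < ‖ξ k‖^2 := pow_pos (hξpos k) 2
        rw [mul_comm] at h2
        exact le_of_mul_le_mul_right h2 hp
      calc ‖∑ k, Df i (Pi.single k (v * c k))‖ ≤ ∑ k, ‖Df i (Pi.single k (v * c k))‖ :=
            norm_sum_le _ _
        _ ≤ ∑ _k : Fin N, C * ‖ξ i‖ * M^(e+1) * ‖v‖ := Finset.sum_le_sum fun k _ => hterm k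
        _ = (N:ℝ) * (C * ‖ξ i‖ * M^(e+1) * ‖v‖) := by
            rw [Finset.sum_const, Finset.card_univ, Fintype.card_fin, nsmul_eq_mul]
        _ = (N:ℝ) * C * ‖ξ i‖ * M^(e+1) * ‖v‖ := by ring
    -- derivative of u and μ
    set u' : ℂ →L[ℝ] ℂ := ∑ i, (D i) • ((Df i).comp Ξ') with hu'def
    have hu : HasFDerivAt (fun w : ℂ => ∑ i, f i (fun k => (w - a k)⁻¹) * D i) u' z := by
      rw [hu'def]
      exact HasFDerivAt.fun_sum fun i _ => (hμi i).mul_const (D i)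
    set μ' : ℂ →L[ℝ] ℂ := ∑ i, (Df i).comp Ξ' with hμ'def
    have hμd : HasFDerivAt (fun w : ℂ => ∑ i, f i (fun k => (w - a k)⁻¹)) μ' z := by
      rw [hμ'def]
      exact HasFDerivAt.fun_sum fun i _ => hμi i
    have hinv : HasFDerivAt (fun w : ℂ => (∑ i, f i (fun k => (w - a k)⁻¹))⁻¹)
        ((((1 : ℂ →L[ℂ] ℂ).smulRight (-(μ^2)⁻¹)).restrictScalars ℝ).comp μ') z := by
      have h1 : HasFDerivAt (fun y : ℂ => y⁻¹)
          (((1 : ℂ →L[ℂ] ℂ).smulRight (-(μ^2)⁻¹)).restrictScalars ℝ) μ :=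
        (hasDerivAt_inv hμne).hasFDerivAt.restrictScalars ℝ
      exact h1.comp z hμd
    set Tg : ℂ →L[ℝ] ℂ :=
      (∑ i, f i ξ * D i) • ((((1 : ℂ →L[ℂ] ℂ).smulRight (-(μ^2)⁻¹)).restrictScalars ℝ).comp μ')
        + μ⁻¹ • u' with hTgdef
    have hprod : HasFDerivAt
        (fun w : ℂ => (∑ i, f i (fun k => (w - a k)⁻¹) * D i)
          * (∑ i, f i (fun k => (w - a k)⁻¹))⁻¹) Tg z := by
      have := hu.fun_mul hinv
      simpa only [hTgdef, ← hξdef, ← hμdef] using this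
    have hopen : {w : ℂ | ∀ i, w ≠ a i} ∈ nhds z := by
      have hcl : IsClosed (Set.range a) := (Set.finite_range a).isClosed
      have : {w : ℂ | ∀ i, w ≠ a i} = (Set.range a)ᶜ := by
        ext w
        simp [Set.mem_range, not_exists, eq_comm]
      rw [this]
      refine hcl.isOpen_compl.mem_nhds ?_
      simp only [Set.mem_compl_iff, Set.mem_range, not_exists]
      intro i h
      exact hz i h.symm
    have hgderiv : HasFDerivAt g Tg z := by
      refine hprod.congr_of_eventuallyEq ?_
      refine Filter.eventuallyEq_of_mem hopen fun w hw => ?_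
      have hw' : ∀ i, w ≠ a i := hw
      simp only [hgdef]
      rw [hψ1 w hw']
      rw [div_eq_mul_inv]
      ring
    refine ⟨hgderiv.differentiableAt, ?_⟩
    rw [hgderiv.fderiv]
    refine ContinuousLinearMap.opNorm_le_bound _ hL0 fun v => ?_
    -- compute Tg v
    have hμ'v : μ' v = ∑ i, ((Df i).comp Ξ') v := by
      rw [hμ'def]; simp [ContinuousLinearMap.sum_apply]
    have hu'v : u' v = ∑ i, D i * (((Df i).comp Ξ') v) := by
      rw [hu'def]
      simp [ContinuousLinearMap.sum_apply, smul_eq_mul]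
    have hTgv : Tg v = (∑ i, (((Df i).comp Ξ') v) * (D i - g z)) * μ⁻¹ := by
      have h0 : Tg v = (∑ i, f i ξ * D i) * (μ' v * (-(μ^2)⁻¹)) + μ⁻¹ * u' v := by
        rw [hTgdef]
        simp only [ContinuousLinearMap.add_apply, ContinuousLinearMap.smul_apply,
          ContinuousLinearMap.comp_apply, ContinuousLinearMap.coe_restrictScalars',
          ContinuousLinearMap.smulRight_apply, ContinuousLinearMap.one_apply,
          smul_eq_mul]
      have hs4 : u' v = ∑ i, (((Df i).comp Ξ') v) * D i := by
        rw [hu'v]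
        exact Finset.sum_congr rfl fun i _ => mul_comm _ _
      have hs3 : (∑ i, (((Df i).comp Ξ') v) * (D i - (∑ j, f j ξ * D j)/μ))
          = (∑ i, (((Df i).comp Ξ') v) * D i)
            - (∑ i, ((Df i).comp Ξ') v) * ((∑ j, f j ξ * D j)/μ) := by
        simp only [mul_sub]
        rw [Finset.sum_sub_distrib]
        congr 1
        rw [Finset.sum_mul]
      rw [h0, hμ'v, hs4, hgz, hs3]
      field_simp
      ring
    rw [hTgv, norm_mul, norm_inv]
    have hsum : ‖∑ i, (((Df i).comp Ξ') v) * (D i - g z)‖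
        ≤ 2*(N:ℝ)^3*C^3*γ*M^(e+1)*‖v‖ := by
      have hterm : ∀ i : Fin N, ‖(((Df i).comp Ξ') v) * (D i - g z)‖
          ≤ 2*(N:ℝ)^2*C^3*γ*M^(e+1)*‖v‖ := by
        intro i
        rw [norm_mul]
        have h1 := hμib i v
        have h2 : ‖D i - g z‖ ≤ 2*(N:ℝ)*C^2*γ*‖z - a i‖ := by
          rw [norm_sub_rev]; exact hg6 i
        calc ‖((Df i).comp Ξ') v‖ * ‖D i - g z‖
            ≤ ((N:ℝ) * C * ‖ξ i‖ * M^(e+1) * ‖v‖) * (2*(N:ℝ)*C^2*γ*‖z - a i‖) :=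
              mul_le_mul h1 h2 (norm_nonneg _) (by positivity)
          _ = (2*(N:ℝ)^2*C^3*γ*M^(e+1)*‖v‖) * (‖ξ i‖ * ‖z - a i‖) := by ring
          _ = 2*(N:ℝ)^2*C^3*γ*M^(e+1)*‖v‖ := by rw [hone i, mul_one]
      calc ‖∑ i, (((Df i).comp Ξ') v) * (D i - g z)‖
          ≤ ∑ i, ‖(((Df i).comp Ξ') v) * (D i - g z)‖ := norm_sum_le _ _
        _ ≤ ∑ _i : Fin N, 2*(N:ℝ)^2*C^3*γ*M^(e+1)*‖v‖ := Finset.sum_le_sum fun i _ => hterm i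
        _ = (N:ℝ) * (2*(N:ℝ)^2*C^3*γ*M^(e+1)*‖v‖) := by
            rw [Finset.sum_const, Finset.card_univ, Fintype.card_fin, nsmul_eq_mul]
        _ = 2*(N:ℝ)^3*C^3*γ*M^(e+1)*‖v‖ := by ring
    calc ‖∑ i, (((Df i).comp Ξ') v) * (D i - g z)‖ * ‖μ‖⁻¹
        ≤ (2*(N:ℝ)^3*C^3*γ*M^(e+1)*‖v‖) * (C⁻¹ * M^(e+1))⁻¹ := by
          refine mul_le_mul hsum ?_ (by positivity) (by positivity)
          exact inv_anti₀ (by positivity) hμlow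
      _ = (2*(N:ℝ)^3*C^4*γ) * ‖v‖ := by
          field_simp
      _ ≤ L * ‖v‖ := by
          rw [hLdef]
          have : 2*(N:ℝ)^3*C^4*γ ≤ 4*(N:ℝ)^3*C^4*γ := by nlinarith
          exact mul_le_mul_of_nonneg_right this (norm_nonneg v)
  -- global pointwise estimate
  have h2NCpos : (1:ℝ) ≤ 2*(N:ℝ)*C^2 := by nlinarith
  have h9 : ∀ (z : ℂ) (j : Fin N), ‖g z - D j‖ ≤ 2*(N:ℝ)*C^2*γ*‖z - a j‖ := by
    intro z j
    by_cases hz : ∀ i, z ≠ a i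
    · exact (key z hz).1 j
    · push_neg at hz
      obtain ⟨i, rfl⟩ := hz
      have hgai : g (a i) = D i := by simp [hgdef, hDdef, hψ2 i]
      rw [hgai]
      calc ‖D i - D j‖ ≤ γ * ‖a i - a j‖ := hDγ i j
        _ ≤ (2*(N:ℝ)*C^2*γ) * ‖a i - a j‖ := by
            refine mul_le_mul_of_nonneg_right ?_ (norm_nonneg _)
            nlinarith
  have h2NCL : 2*(N:ℝ)*C^2*γ ≤ L := by
    rw [hLdef]
    have h1 : (N:ℝ) ≤ (N:ℝ)^3 := by
      calc (N:ℝ) = (N:ℝ)^1 := (pow_one _).symm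
        _ ≤ (N:ℝ)^3 := pow_le_pow_right₀ hN1 (by norm_num)
    have h2 : C^2 ≤ C^4 := pow_le_pow_right₀ hC1 (by norm_num)
    have h3 : (N:ℝ)*C^2 ≤ (N:ℝ)^3*C^4 := by nlinarith
    nlinarith
  -- the global Lipschitz estimate for g
  have Glip : ∀ p q : ℂ, ‖g p - g q‖ ≤ L * ‖p - q‖ := by
    have hone : ∀ (p : ℂ) (j : Fin N), ‖g p - g (a j)‖ ≤ L * ‖p - a j‖ := by
      intro p j
      have hgaj : g (a j) = D j := by simp [hgdef, hDdef, hψ2 j]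
      rw [hgaj]
      calc ‖g p - D j‖ ≤ 2*(N:ℝ)*C^2*γ*‖p - a j‖ := h9 p j
        _ ≤ L * ‖p - a j‖ := mul_le_mul_of_nonneg_right h2NCL (norm_nonneg _)
    intro p q
    by_cases hq : ∀ i, q ≠ a i
    swap
    · push_neg at hq
      obtain ⟨j, rfl⟩ := hq
      exact hone p j
    by_cases hp : ∀ i, p ≠ a i
    swap
    · push_neg at hp
      obtain ⟨j, rfl⟩ := hp
      rw [norm_sub_rev, norm_sub_rev (a j) q]
      exact hone q j
    rcases eq_or_ne p q with rfl | hpq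
    · simp
    refine le_of_forall_pos_le_add ?_
    intro ε hε
    have hLpos : 0 < L + 1 := by linarith
    have hc : ContinuousAt g q := (key q hq).2.1.continuousAt
    rcases Metric.continuousAt_iff.1 hc (ε/2) (by positivity) with ⟨δ₀, hδ₀, hball⟩
    set δ : ℝ := min δ₀ (ε/(2*(L+1))) with hδdef
    have hδpos : 0 < δ := lt_min hδ₀ (by positivity)
    have hqp : q - p ≠ 0 := sub_ne_zero.2 hpq.symm
    have hap : ∀ i, a i - p ≠ 0 := fun i => sub_ne_zero.2 fun h => (hp i) (by rw [h])
    obtain ⟨q', hq'near, hseg⟩ := aux_avoid13 a p q hqp hap hδpos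
    have hsegsub : ∀ x ∈ segment ℝ p q', ∀ i, x ≠ a i := by
      intro x hx
      rw [segment_eq_image'] at hx
      obtain ⟨t, ht, rfl⟩ := hx
      exact hseg t ht
    have hmvt : ‖g q' - g p‖ ≤ L * ‖q' - p‖ := by
      refine Convex.norm_image_sub_le_of_norm_fderiv_le
        (fun x hx => (key x (hsegsub x hx)).2.1)
        (fun x hx => (key x (hsegsub x hx)).2.2)
        (convex_segment p q') (left_mem_segment ℝ p q') (right_mem_segment ℝ p q')
    have hq'q : ‖g q' - g q‖ ≤ ε/2 := by
      have := hball (show dist q' q < δ₀ by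
        rw [dist_eq_norm]
        exact lt_of_lt_of_le hq'near (min_le_left _ _))
      rw [dist_eq_norm] at this
      exact this.le
    have htri : ‖g p - g q‖ ≤ ‖g q' - g p‖ + ‖g q' - g q‖ := by
      have h1 : g p - g q = -(g q' - g p) + (g q' - g q) := by ring
      rw [h1]
      refine (norm_add_le _ _).trans ?_
      rw [norm_neg]
    have hq'p : ‖q' - p‖ ≤ ‖p - q‖ + δ := by
      calc ‖q' - p‖ ≤ ‖q' - q‖ + ‖q - p‖ := norm_sub_le_norm_sub_add_norm_sub _ _ _
        _ ≤ δ + ‖q - p‖ := by linarith [hq'near.le]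
        _ = ‖p - q‖ + δ := by rw [norm_sub_rev]; ring
    have hLδ : L * δ ≤ ε/2 := by
      have hδ2 : δ ≤ ε/(2*(L+1)) := min_le_right _ _
      have : L * δ ≤ (L+1) * (ε/(2*(L+1))) := by
        refine mul_le_mul (by linarith) hδ2 hδpos.le (by linarith)
      calc L * δ ≤ (L+1) * (ε/(2*(L+1))) := this
        _ = ε/2 := by field_simp
    calc ‖g p - g q‖ ≤ ‖g q' - g p‖ + ‖g q' - g q‖ := htri
      _ ≤ L * ‖q' - p‖ + ε/2 := by linarith
      _ ≤ L * (‖p - q‖ + δ) + ε/2 := by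
          have := mul_le_mul_of_nonneg_left hq'p hL0
          linarith
      _ = L * ‖p - q‖ + (L * δ + ε/2) := by ring
      _ ≤ L * ‖p - q‖ + ε := by linarith
  -- conclusions
  have hψsub : ∀ p q : ℂ, ψ p - ψ q = (g p - g q) + (p - q) := by
    intro p q
    simp only [hgdef]
    ring
  constructor
  · refine LipschitzWith.of_dist_le_mul fun p q => ?_
    rw [Real.coe_toNNReal _ (by positivity), dist_eq_norm, dist_eq_norm, hψsub p q]
    calc ‖(g p - g q) + (p - q)‖ ≤ ‖g p - g q‖ + ‖p - q‖ := norm_add_le _ _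
      _ ≤ L * ‖p - q‖ + ‖p - q‖ := by linarith [Glip p q]
      _ = (4 * (N:ℝ)^3 * C^4 * γ + 1) * ‖p - q‖ := by rw [hLdef]; ring
  · intro hγlt
    have hpos4 : (0:ℝ) < 4*(N:ℝ)^3*C^4 := by positivity
    have hL1 : L < 1 := by
      rw [hLdef]
      calc 4*(N:ℝ)^3*C^4*γ < 4*(N:ℝ)^3*C^4*(4*(N:ℝ)^3*C^4)⁻¹ :=
            (mul_lt_mul_iff_right₀ hpos4).2 hγlt
        _ = 1 := mul_inv_cancel₀ hpos4.ne'
    have h1L : 0 < 1 - L := by linarith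
    have hlow : ∀ p q : ℂ, (1 - L) * ‖p - q‖ ≤ ‖ψ p - ψ q‖ := by
      intro p q
      have h1 : ‖p - q‖ ≤ ‖ψ p - ψ q‖ + ‖g p - g q‖ := by
        have h2 : p - q = (ψ p - ψ q) - (g p - g q) := by rw [hψsub p q]; ring
        rw [h2]
        exact norm_sub_le _ _
      have := Glip p q
      nlinarith [norm_nonneg (p - q)]
    refine ⟨⟨?_, ?_⟩, ?_⟩
    · -- injective
      intro p q hpq
      have := hlow p q
      rw [hpq, sub_self, norm_zero] at this
      have h0 : ‖p - q‖ ≤ 0 := by nlinarith [norm_nonneg (p - q)]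
      have := le_antisymm h0 (norm_nonneg _)
      rwa [norm_eq_zero, sub_eq_zero] at this
    · -- surjective
      intro w
      have glip : LipschitzWith (Real.toNNReal L) (fun z : ℂ => w - g z) := by
        refine LipschitzWith.of_dist_le_mul fun p q => ?_
        rw [Real.coe_toNNReal _ hL0, dist_eq_norm, dist_eq_norm]
        have h1 : (w - g p) - (w - g q) = -(g p - g q) := by ring
        rw [h1, norm_neg]
        exact Glip p q
      have hcontr : ContractingWith (Real.toNNReal L) (fun z : ℂ => w - g z) := by
        refine ⟨?_, glip⟩
        rw [← Real.toNNReal_one]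
        exact (Real.toNNReal_lt_toNNReal_iff one_pos).2 hL1
      refine ⟨hcontr.fixedPoint _, ?_⟩
      have hfix := hcontr.fixedPoint_isFixedPt
      have hfix' : w - g (hcontr.fixedPoint (fun z : ℂ => w - g z)) =
          hcontr.fixedPoint (fun z : ℂ => w - g z) := hfix
      have hgz : g (hcontr.fixedPoint (fun z : ℂ => w - g z)) =
          ψ (hcontr.fixedPoint (fun z : ℂ => w - g z))
            - hcontr.fixedPoint (fun z : ℂ => w - g z) := by simp [hgdef]
      rw [hgz] at hfix'
      linear_combination -hfix'
    · -- lower Lipschitz bound for the inverse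
      intro p q
      have h := hlow p q
      calc ‖p - q‖ = (1 - L)⁻¹ * ((1 - L) * ‖p - q‖) := by field_simp
        _ ≤ (1 - L)⁻¹ * ‖ψ p - ψ q‖ := by
            refine mul_le_mul_of_nonneg_left h ?_
            positivity
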